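/- arXiv:1910.09040 — 2 statements merged into one kernel-verified Lean document; each statement's English description precedes it below -/
import Mathlib

section
/- Let n > 0, 0 < q < p, and set R = (p-q)/q. Define β_1(k), β_2(k) by β_1(0) = β_2(0) = 4/n² and [β_1(k+1); β_2(k+1)] = (n/2)[[0, p-q],[q, p-q]][β_1(k); β_2(k)]. Then β_1(k) = (4/n²) · [ ((1 - √(R/(R+4)))/2) λ_-^k + ((1 + √(R/(R+4)))/2) λ_+^k ], where λ_± = (nq/4)(R ± √(R(R+4))). -/
theorem stmt_11 (n p q : ℝ) (hn : 0 < n) (hq : 0 < q) (hqp : q < p)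
    (R : ℝ) (hR : R = (p - q) / q)
    (β₁ β₂ : ℕ → ℝ) (h10 : β₁ 0 = 4 / n ^ 2) (h20 : β₂ 0 = 4 / n ^ 2)
    (hrec : ∀ k : ℕ,
      β₁ (k + 1) = (n / 2) * ((p - q) * β₂ k) ∧
      β₂ (k + 1) = (n / 2) * (q * β₁ k + (p - q) * β₂ k)) :
    ∀ k : ℕ, β₁ k = (4 / n ^ 2) *
      ((1 - Real.sqrt (R / (R + 4))) / 2 * ((n * q / 4) * (R - Real.sqrt (R * (R + 4)))) ^ k
       + (1 + Real.sqrt (R / (R + 4))) / 2 * ((n * q / 4) * (R + Real.sqrt (R * (R + 4)))) ^ k) := by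
  have hq0 : q ≠ 0 := ne_of_gt hq
  have hR0 : 0 < R := by
    rw [hR]; exact div_pos (by linarith) hq
  have hpq : p - q = q * R := by
    rw [hR]; field_simp
  have hR4 : 0 < R + 4 := by linarith
  set s := Real.sqrt (R * (R + 4)) with hs
  set t := Real.sqrt (R / (R + 4)) with ht
  have hs2 : s ^ 2 = R * (R + 4) := Real.sq_sqrt (by positivity)
  have hspos : 0 < s := Real.sqrt_pos.mpr (by positivity)
  have hts : t * s = R := by
    rw [ht, hs, ← Real.sqrt_mul (by positivity)]
    rw [show R / (R + 4) * (R * (R + 4)) = R ^ 2 by field_simp]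
    exact Real.sqrt_sq hR0.le
  set L := (n * q / 4) * (R - s) with hL
  set P := (n * q / 4) * (R + s) with hP
  have key : ∀ k : ℕ, β₁ k = (4 / n ^ 2) * ((1 - t) / 2 * L ^ k + (1 + t) / 2 * P ^ k) ∧
      2 * s * β₂ k = (4 / n ^ 2) * ((s - R - 2) * L ^ k + (s + R + 2) * P ^ k) := by
    intro k
    induction k with
    | zero =>
      constructor
      · simp [h10]; ring
      · simp [h20]; ring
    | succ k ih =>
      obtain ⟨h1, h2⟩ := ih
      constructor
      · have h3 : 2 * s * β₁ (k + 1) =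
            2 * s * ((4 / n ^ 2) * ((1 - t) / 2 * L ^ (k + 1) + (1 + t) / 2 * P ^ (k + 1))) := by
          rw [(hrec k).1, hpq]
          linear_combination (n * q * R / 2) * h2
            + (4 / n ^ 2) * (n * q / 4) * ((R - s) * L ^ k - (R + s) * P ^ k) * hts
            + (4 / n ^ 2) * (n * q / 4) * (L ^ k - P ^ k) * hs2
        exact mul_left_cancel₀ (by positivity) h3
      · rw [(hrec k).2, hpq]
        linear_combination n * q * s * h1 + (n * q * R / 2) * h2
          + (4 / n ^ 2) * (n * q / 4) * (-2 * L ^ k + 2 * P ^ k) * hts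
          + (4 / n ^ 2) * (n * q / 4) * (L ^ k - P ^ k) * hs2
  intro k
  exact (key k).1
end

section
/- Let n > 0 and 0 < q < p. Define Y^{(k)} ∈ ℝ⁴ by Y^{(0)} = (4/n²)(1,0,0,0) and Y^{(k+1)} = T Y^{(k)} where T = [[np/2, 0, nq/2, 0], [nq/2, 0, nq/2, 0], [0, nq/2, 0, nq/2], [0, nq/2, 0, np/2]]. Define β_1(k) = Y_1 - Y_2 + Y_3 - Y_4, β_2(k) = Y_1 - Y_4, ζ_1(k) = Y_1 + Y_2 + Y_3 + Y_4, ζ_2(k) = Y_1 + Y_4 (all evaluated at Y^{(k)}). Then for all k ≥ 0: [β_1(k+1); β_2(k+1)] = (n/2)[[0, p-q],[q, p-q]][β_1(k); β_2(k)] and [ζ_1(k+1); ζ_2(k+1)] = (n/2)[[2q, p-q],[q, p-q]][ζ_1(k); ζ_2(k)]. -/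
theorem stmt_13 (n p q : ℝ) (hn : 0 < n) (hq : 0 < q) (hqp : q < p)
    (Y : ℕ → Fin 4 → ℝ)
    (hY0 : Y 0 = ![4 / n ^ 2, 0, 0, 0])
    (hrec : ∀ k : ℕ,
      Y (k + 1) 0 = (n * p / 2) * Y k 0 + (n * q / 2) * Y k 2 ∧
      Y (k + 1) 1 = (n * q / 2) * Y k 0 + (n * q / 2) * Y k 2 ∧
      Y (k + 1) 2 = (n * q / 2) * Y k 1 + (n * q / 2) * Y k 3 ∧
      Y (k + 1) 3 = (n * q / 2) * Y k 1 + (n * p / 2) * Y k 3) :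
    ∀ k : ℕ,
      (Y (k + 1) 0 - Y (k + 1) 1 + Y (k + 1) 2 - Y (k + 1) 3)
        = (n / 2) * ((p - q) * (Y k 0 - Y k 3)) ∧
      (Y (k + 1) 0 - Y (k + 1) 3)
        = (n / 2) * (q * (Y k 0 - Y k 1 + Y k 2 - Y k 3) + (p - q) * (Y k 0 - Y k 3)) ∧
      (Y (k + 1) 0 + Y (k + 1) 1 + Y (k + 1) 2 + Y (k + 1) 3)
        = (n / 2) * (2 * q * (Y k 0 + Y k 1 + Y k 2 + Y k 3) + (p - q) * (Y k 0 + Y k 3)) ∧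
      (Y (k + 1) 0 + Y (k + 1) 3)
        = (n / 2) * (q * (Y k 0 + Y k 1 + Y k 2 + Y k 3) + (p - q) * (Y k 0 + Y k 3)) := by
  intro k
  obtain ⟨h0, h1, h2, h3⟩ := hrec k
  refine ⟨?_, ?_, ?_, ?_⟩ <;> simp only [h0, h1, h2, h3] <;> ring
end
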